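/- Fix n ≥ 2 and m ≥ 2. Let p be a prime satisfying p ≥ 3·(n choose 2) + 1 and p ≡ 1 (mod m). Then |{g^m : g ∈ SL_n(ℤ/pℤ)}| ≤ (1 − 1/(6·n!))·|SL_n(ℤ/pℤ)|. -/

import Mathlib

open scoped Classical
open Matrix Finset

section Torus
variable (n p : ℕ) [Fact p.Prime]

def prodHom : (Fin n → (ZMod p)ˣ) →* (ZMod p)ˣ where
  toFun v := ∏ i, v i
  map_one' := by simp
  map_mul' x y := by simp [Finset.prod_mul_distrib]

theorem prodHom_apply (v : Fin n → (ZMod p)ˣ) : prodHom n p v = ∏ i, v i := rfl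

abbrev Tor : Subgroup (Fin n → (ZMod p)ˣ) := (prodHom n p).ker

theorem mem_Tor_iff (v : Fin n → (ZMod p)ˣ) : v ∈ Tor n p ↔ ∏ i, v i = 1 := Iff.rfl

noncomputable instance : Fintype (Tor n p) := Fintype.ofFinite _

def dIag : Tor n p →* Matrix.SpecialLinearGroup (Fin n) (ZMod p) where
  toFun v := ⟨Matrix.diagonal (fun i => (v.1 i : ZMod p)), by
    have h2 : ∏ i, (v.1 i : ZMod p) = ((∏ i, v.1 i : (ZMod p)ˣ) : ZMod p) := by
      push_cast; ring
    have h3 : ∏ i, v.1 i = 1 := v.2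
    simp [Matrix.det_diagonal, h2, h3]⟩
  map_one' := by
    apply Subtype.ext
    simp
  map_mul' x y := by
    apply Subtype.ext
    show Matrix.diagonal _ = Matrix.diagonal _ * Matrix.diagonal _
    rw [Matrix.diagonal_mul_diagonal]
    exact congrArg Matrix.diagonal (funext fun i => by simp)

theorem coe_dIag (v : Tor n p) :
    (dIag n p v : Matrix (Fin n) (Fin n) (ZMod p)) = Matrix.diagonal (fun i => (v.1 i : ZMod p)) := rfl

theorem dIag_injective : Function.Injective (dIag n p) := by
  intro v w h
  have h' := Subtype.ext_iff.mp h
  rw [coe_dIag, coe_dIag] at h'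
  ext i
  have := congrFun (congrFun h' i) i
  simpa [Matrix.diagonal_apply_eq] using this

theorem card_Tor (hn : 1 ≤ n) : Fintype.card (Tor n p) = (p - 1) ^ (n - 1) := by
  have hsurj : Function.Surjective (prodHom n p) := by
    intro z
    refine ⟨Pi.mulSingle ⟨0, by omega⟩ z, ?_⟩
    simp [prodHom]
  have h1 : Nat.card (Fin n → (ZMod p)ˣ) =
      Nat.card ((Fin n → (ZMod p)ˣ) ⧸ Tor n p) * Nat.card (Tor n p) :=
    Subgroup.card_eq_card_quotient_mul_card_subgroup _
  have h2 : Nat.card ((Fin n → (ZMod p)ˣ) ⧸ Tor n p) = Nat.card (ZMod p)ˣ :=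
    Nat.card_congr (QuotientGroup.quotientKerEquivOfSurjective _ hsurj).toEquiv
  have h3 : Nat.card (Fin n → (ZMod p)ˣ) = (p - 1) ^ n := by
    simp [Nat.card_eq_fintype_card, ZMod.card_units_eq_totient,
      Nat.totient_prime (Fact.out : p.Prime)]
  have hq : 0 < p - 1 := by
    have := (Fact.out : p.Prime).two_le; omega
  have h4 : Nat.card (ZMod p)ˣ = p - 1 := by
    simp [Nat.card_eq_fintype_card, ZMod.card_units_eq_totient,
      Nat.totient_prime (Fact.out : p.Prime)]
  have key : (p - 1) ^ n = (p - 1) * Fintype.card (Tor n p) := by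
    rw [← h3, h1, h2, h4, Nat.card_eq_fintype_card]
  have hpow : (p - 1) ^ n = (p - 1) * (p - 1) ^ (n - 1) := by
    conv_lhs => rw [show n = 1 + (n - 1) by omega]
    rw [pow_add, pow_one]
  exact Nat.eq_of_mul_eq_mul_left hq (key.symm.trans hpow)

end Torus

section Comm
variable {n p : ℕ} [Fact p.Prime]

theorem comm_diag {d : Fin n → ZMod p} (hd : Function.Injective d)
    {A : Matrix (Fin n) (Fin n) (ZMod p)}
    (h : A * Matrix.diagonal d = Matrix.diagonal d * A) :
    A = Matrix.diagonal (fun i => A i i) := by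
  funext i j
  rcases eq_or_ne i j with rfl | hij
  · simp [Matrix.diagonal_apply_eq]
  · have h' := congrFun (congrFun h i) j
    rw [Matrix.mul_diagonal, Matrix.diagonal_mul] at h'
    have : A i j * (d j - d i) = 0 := by ring_nf; linear_combination h'
    rcases mul_eq_zero.mp this with h0 | h0
    · simp [Matrix.diagonal_apply_ne _ hij, h0]
    · have hdd : d j = d i := by linear_combination h0
      exact absurd (hd hdd).symm hij

/-- If `g` in `SL_n` commutes with `dIag v` for `v` with pairwise distinct entries,
then `g = dIag w` for some `w` in the torus. -/
theorem comm_dIag_eq {v : Tor n p} (hv : Function.Injective (fun i => v.1 i))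
    {g : Matrix.SpecialLinearGroup (Fin n) (ZMod p)}
    (h : g * dIag n p v = dIag n p v * g) :
    ∃ w : Tor n p, dIag n p w = g := by
  have hd : Function.Injective (fun i => (v.1 i : ZMod p)) := by
    intro i j hij
    exact hv (Units.ext hij)
  have hmat : (g : Matrix (Fin n) (Fin n) (ZMod p)) * Matrix.diagonal (fun i => (v.1 i : ZMod p))
      = Matrix.diagonal (fun i => (v.1 i : ZMod p)) * (g : Matrix (Fin n) (Fin n) (ZMod p)) := by
    have := Subtype.ext_iff.mp h
    simpa [coe_dIag] using this
  have hdiag := comm_diag hd hmat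
  -- entries are nonzero since det = 1
  have hdet : ∏ i, (g : Matrix (Fin n) (Fin n) (ZMod p)) i i = 1 := by
    have := g.2
    rw [hdiag] at this
    simpa [Matrix.det_diagonal] using this
  have hne : ∀ i, (g : Matrix (Fin n) (Fin n) (ZMod p)) i i ≠ 0 := by
    intro i h0
    have := Finset.prod_eq_zero (f := fun k => (g : Matrix (Fin n) (Fin n) (ZMod p)) k k)
      (Finset.mem_univ i) h0
    rw [this] at hdet
    exact zero_ne_one hdet
  refine ⟨⟨fun i => Units.mk0 _ (hne i), ?_⟩, ?_⟩
  · show ∏ i, Units.mk0 _ (hne i) = 1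
    apply Units.ext
    push_cast
    simpa using hdet
  · apply Subtype.ext
    rw [coe_dIag]
    exact hdiag.symm

/-- Root extraction: if `g^m = dIag v` with `v` regular, then `v` is an `m`-th
power in the torus. -/
theorem root_in_torus {v : Tor n p} (hv : Function.Injective (fun i => v.1 i))
    {g : Matrix.SpecialLinearGroup (Fin n) (ZMod p)} {m : ℕ} (h : g ^ m = dIag n p v) :
    ∃ w : Tor n p, w ^ m = v := by
  have hcomm : g * dIag n p v = dIag n p v * g := by
    rw [← h, ← pow_succ, ← pow_succ']
  obtain ⟨w, hw⟩ := comm_dIag_eq hv hcomm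
  refine ⟨w, dIag_injective n p ?_⟩
  rw [map_pow, hw, h]

end Comm

section Count
variable {n p m : ℕ} [Fact p.Prime]

theorem exists_unit_order (hm : 2 ≤ m) (hdvd : m ∣ p - 1) :
    ∃ z : (ZMod p)ˣ, z ^ m = 1 ∧ ∀ j, z ^ j = 1 → m ∣ j := by
  obtain ⟨g, hg⟩ := IsCyclic.exists_generator (α := (ZMod p)ˣ)
  have hord : orderOf g = p - 1 := by
    rw [orderOf_eq_card_of_forall_mem_zpowers hg, Nat.card_eq_fintype_card,
      ZMod.card_units_eq_totient,
      Nat.totient_prime (Fact.out : p.Prime)]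
  have hq : 0 < p - 1 := by have := (Fact.out : p.Prime).two_le; omega
  refine ⟨g ^ ((p - 1) / m), ?_, ?_⟩
  · rw [← pow_mul, Nat.div_mul_cancel hdvd, ← hord, pow_orderOf_eq_one]
  · intro j hj
    have horder : orderOf (g ^ ((p - 1) / m)) = m := by
      rw [orderOf_pow, hord, Nat.gcd_eq_right (Nat.div_dvd_of_dvd hdvd),
        Nat.div_div_self hdvd (by omega)]
    rw [← horder]
    exact orderOf_dvd_of_pow_eq_one hj

theorem exists_ker_elt (hn : 2 ≤ n) (hm : 2 ≤ m) (hdvd : m ∣ p - 1) :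
    ∃ k : Tor n p, k ^ m = 1 ∧ ∀ j, k ^ j = 1 → m ∣ j := by
  obtain ⟨z, hz1, hz2⟩ := exists_unit_order hm hdvd
  set i0 : Fin n := ⟨0, by omega⟩
  set i1 : Fin n := ⟨1, by omega⟩
  have hne : i0 ≠ i1 := by simp [i0, i1, Fin.ext_iff]
  set f : Fin n → (ZMod p)ˣ := Pi.mulSingle i0 z * Pi.mulSingle i1 z⁻¹ with hf
  have hmem : f ∈ Tor n p := by
    rw [mem_Tor_iff, hf]
    simp only [Pi.mul_apply]
    rw [Finset.prod_mul_distrib, Fintype.prod_pi_mulSingle' i0 z,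
      Fintype.prod_pi_mulSingle' i1 z⁻¹, mul_inv_cancel]
  have hval : f i0 = z := by
    rw [hf, Pi.mul_apply, Pi.mulSingle_eq_same, Pi.mulSingle_eq_of_ne hne, mul_one]
  refine ⟨⟨f, hmem⟩, ?_, ?_⟩
  · apply Subtype.ext
    have hcoe : ((⟨f, hmem⟩ : Tor n p) ^ m : Tor n p).1 = f ^ m := by
      exact SubmonoidClass.coe_pow _ m
    rw [hcoe]
    show f ^ m = (1 : Fin n → (ZMod p)ˣ)
    rw [hf, mul_pow, ← Pi.mulSingle_pow, ← Pi.mulSingle_pow, hz1, inv_pow, hz1, inv_one,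
      Pi.mulSingle_one, Pi.mulSingle_one, mul_one]
  · intro j hj
    have hj' : f ^ j = (1 : Fin n → (ZMod p)ˣ) := by
      have := congrArg Subtype.val hj
      rwa [SubmonoidClass.coe_pow] at this
    have := congrFun hj' i0
    rw [Pi.pow_apply, hval] at this
    exact hz2 j this

theorem pow_image_card (hn : 2 ≤ n) (hm : 2 ≤ m) (hdvd : m ∣ p - 1) :
    2 * ((univ : Finset (Tor n p)).image (fun w => w ^ m)).card ≤ Fintype.card (Tor n p) := by
  obtain ⟨k, hk1, hk2⟩ := exists_ker_elt hn hm hdvd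
  have hkne : k ≠ 1 := by
    intro h
    have h1 : m ∣ 1 := hk2 1 (by rw [h, pow_one])
    exact absurd (Nat.le_of_dvd one_pos h1) (by omega)
  have := Finset.mul_card_image_le_card (f := fun w : Tor n p => w ^ m) univ 2 ?_
  · simpa using this
  · intro b hb
    obtain ⟨x, _, hx⟩ := Finset.mem_image.mp hb
    have hsub : ({x, x * k} : Finset (Tor n p)) ⊆ univ.filter (fun w => w ^ m = b) := by
      intro y hy
      rcases Finset.mem_insert.mp hy with rfl | hy
      · simp [hx]
      · rw [Finset.mem_singleton.mp hy]
        simp [mul_pow, hk1, hx]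
    have hcard : ({x, x * k} : Finset (Tor n p)).card = 2 :=
      Finset.card_pair (fun h => hkne (mul_left_cancel (a := x) (by rw [mul_one, ← h])))
    have hle := Finset.card_le_card hsub
    rw [hcard] at hle
    exact le_trans hle (le_of_eq (by congr 1))

theorem pow_image_card₃ (hn : 2 ≤ n) (hm : 3 ≤ m) (hdvd : m ∣ p - 1) :
    3 * ((univ : Finset (Tor n p)).image (fun w => w ^ m)).card ≤ Fintype.card (Tor n p) := by
  obtain ⟨k, hk1, hk2⟩ := exists_ker_elt hn (by omega) hdvd
  have hkne : k ≠ 1 := by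
    intro h
    have h1 : m ∣ 1 := hk2 1 (by rw [h, pow_one])
    exact absurd (Nat.le_of_dvd one_pos h1) (by omega)
  have hkne2 : k ^ 2 ≠ 1 := by
    intro h
    have h1 : m ∣ 2 := hk2 2 h
    exact absurd (Nat.le_of_dvd two_pos h1) (by omega)
  have := Finset.mul_card_image_le_card (f := fun w : Tor n p => w ^ m) univ 3 ?_
  · simpa using this
  · intro b hb
    obtain ⟨x, _, hx⟩ := Finset.mem_image.mp hb
    have hsub : ({x, x * k, x * k ^ 2} : Finset (Tor n p)) ⊆
        univ.filter (fun w => w ^ m = b) := by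
      intro y hy
      simp only [Finset.mem_insert, Finset.mem_singleton] at hy
      rcases hy with rfl | rfl | rfl
      · simp [hx]
      · simp [mul_pow, hk1, hx]
      · have hkk : (k ^ 2) ^ m = 1 := by rw [← pow_mul, mul_comm, pow_mul, hk1, one_pow]
        simp [mul_pow, hkk, hx]
    have hd1 : x ≠ x * k := fun h => hkne (mul_left_cancel (a := x) (by rw [mul_one, ← h]))
    have hd2 : x ≠ x * k ^ 2 := fun h => hkne2 (mul_left_cancel (a := x) (by rw [mul_one, ← h]))
    have hd3 : x * k ≠ x * k ^ 2 := by
      intro h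
      have h2 : k = k * k := by rw [← sq]; exact mul_left_cancel h
      exact hkne (mul_left_cancel (a := k) (by rw [mul_one]; exact h2)).symm
    have hx1 : x ∉ ({x * k, x * k ^ 2} : Finset (Tor n p)) := by
      simp only [Finset.mem_insert, Finset.mem_singleton]
      rintro (h | h)
      · exact hd1 h
      · exact hd2 h
    have hcard : ({x, x * k, x * k ^ 2} : Finset (Tor n p)).card = 3 := by
      rw [Finset.card_insert_of_notMem hx1, Finset.card_pair hd3]
    have hle := Finset.card_le_card hsub
    rw [hcard] at hle
    exact le_trans hle (le_of_eq (by congr 1))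

end Count

section Count2
variable {n p m : ℕ} [Fact p.Prime]

theorem pair_card (hn : 3 ≤ n) {i j : Fin n} (hij : i ≠ j) :
    ((univ : Finset (Tor n p)).filter (fun v => v.1 i = v.1 j)).card ≤ (p - 1) ^ (n - 2) := by
  obtain ⟨i0, hi0⟩ : ∃ k : Fin n, k ∉ ({i, j} : Finset (Fin n)) := by
    by_contra hcon
    push_neg at hcon
    have h1 : (univ : Finset (Fin n)).card ≤ ({i, j} : Finset (Fin n)).card :=
      Finset.card_le_card (fun k _ => hcon k)
    have h2 : ({i, j} : Finset (Fin n)).card ≤ 2 :=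
      le_trans (Finset.card_insert_le _ _) (by simp)
    rw [Finset.card_univ, Fintype.card_fin] at h1
    omega
  have hi0i : i0 ≠ i := fun h => hi0 (by simp [h])
  have hi0j : i0 ≠ j := fun h => hi0 (by simp [h])
  have hcard2 : Fintype.card {k : Fin n // k ≠ i0 ∧ k ≠ j} = n - 2 := by
    rw [Fintype.card_subtype]
    have : (univ : Finset (Fin n)).filter (fun k => k ≠ i0 ∧ k ≠ j) = univ \ {i0, j} := by
      ext k; simp [not_or]
    rw [this, Finset.card_sdiff_of_subset (Finset.subset_univ _), Finset.card_univ, Fintype.card_fin,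
      Finset.card_pair hi0j]
  have hinj : Set.InjOn (fun (v : Tor n p) => (fun k : {k : Fin n // k ≠ i0 ∧ k ≠ j} => v.1 k.1))
      ((univ : Finset (Tor n p)).filter (fun v => v.1 i = v.1 j)) := by
    intro v hv w hw heq
    rw [Finset.coe_filter] at hv hw
    have hvij : v.1 i = v.1 j := hv.2
    have hwij : w.1 i = w.1 j := hw.2
    have hagree : ∀ l, l ≠ i0 → v.1 l = w.1 l := by
      intro l hl
      rcases eq_or_ne l j with rfl | hlj
      · have hi' : v.1 i = w.1 i := congrFun heq ⟨i, hi0i.symm, hij⟩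
        rw [← hvij, ← hwij]; exact hi'
      · exact congrFun heq ⟨l, hl, hlj⟩
    apply Subtype.ext
    funext l
    rcases eq_or_ne l i0 with rfl | hl
    · have hv1 := (mem_Tor_iff _ _ _).mp v.2
      have hw1 := (mem_Tor_iff _ _ _).mp w.2
      rw [← Finset.mul_prod_erase univ _ (Finset.mem_univ l)] at hv1 hw1
      have : ∏ k ∈ univ.erase l, v.1 k = ∏ k ∈ univ.erase l, w.1 k :=
        Finset.prod_congr rfl (fun k hk => hagree k (Finset.ne_of_mem_erase hk))
      rw [this] at hv1
      exact mul_right_cancel (hv1.trans hw1.symm)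
    · exact hagree l hl
  have := Finset.card_le_card_of_injOn _ (fun v _ => Finset.mem_univ _) hinj
  calc ((univ : Finset (Tor n p)).filter (fun v => v.1 i = v.1 j)).card
      ≤ (univ : Finset ({k : Fin n // k ≠ i0 ∧ k ≠ j} → (ZMod p)ˣ)).card := this
    _ = (p - 1) ^ (n - 2) := by
        rw [Finset.card_univ, Fintype.card_fun, hcard2, ZMod.card_units_eq_totient,
          Nat.totient_prime (Fact.out : p.Prime)]

theorem nonreg_card (hn : 3 ≤ n) (hq : 3 * n.choose 2 ≤ p - 1) :
    3 * ((univ : Finset (Tor n p)).filter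
        (fun v => ¬ Function.Injective (fun i => v.1 i))).card ≤ Fintype.card (Tor n p) := by
  classical
  set A : Finset (Fin n) → Finset (Tor n p) :=
    fun s => univ.filter (fun v => ∃ i ∈ s, ∃ j ∈ s, i ≠ j ∧ v.1 i = v.1 j) with hA
  have hcover : (univ : Finset (Tor n p)).filter
      (fun v => ¬ Function.Injective (fun i => v.1 i)) ⊆
      ((univ : Finset (Fin n)).powersetCard 2).biUnion A := by
    intro v hv
    rw [Finset.mem_filter] at hv
    obtain ⟨a, b, hab, hne⟩ := Function.not_injective_iff.mp hv.2
    refine Finset.mem_biUnion.mpr ⟨{a, b}, ?_, ?_⟩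
    · exact Finset.mem_powersetCard.mpr ⟨Finset.subset_univ _, Finset.card_pair hne⟩
    · rw [hA]
      refine Finset.mem_filter.mpr ⟨Finset.mem_univ _, a, by simp, b, by simp, hne, hab⟩
  have hbound : ∀ s ∈ (univ : Finset (Fin n)).powersetCard 2,
      (A s).card ≤ (p - 1) ^ (n - 2) := by
    intro s hs
    obtain ⟨i, j, hij, rfl⟩ :=
      Finset.card_eq_two.mp (Finset.mem_powersetCard.mp hs).2
    have hsub : A {i, j} ⊆ univ.filter (fun v => v.1 i = v.1 j) := by
      intro v hv
      rw [hA, Finset.mem_filter] at hv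
      obtain ⟨_, i', hi', j', hj', hne', heq'⟩ := hv
      simp only [Finset.mem_insert, Finset.mem_singleton] at hi' hj'
      refine Finset.mem_filter.mpr ⟨Finset.mem_univ _, ?_⟩
      rcases hi' with rfl | rfl <;> rcases hj' with rfl | rfl
      · exact absurd rfl hne'
      · exact heq'
      · exact heq'.symm
      · exact absurd rfl hne'
    exact le_trans (Finset.card_le_card hsub) (pair_card hn hij)
  have hcard := Finset.card_le_card hcover
  have hbiu := Finset.card_biUnion_le (s := (univ : Finset (Fin n)).powersetCard 2) (t := A)
  have hsum : ∑ s ∈ (univ : Finset (Fin n)).powersetCard 2, (A s).card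
      ≤ n.choose 2 * (p - 1) ^ (n - 2) := by
    calc ∑ s ∈ (univ : Finset (Fin n)).powersetCard 2, (A s).card
        ≤ ∑ _s ∈ (univ : Finset (Fin n)).powersetCard 2, (p - 1) ^ (n - 2) :=
          Finset.sum_le_sum hbound
      _ = n.choose 2 * (p - 1) ^ (n - 2) := by
          rw [Finset.sum_const, smul_eq_mul, Finset.card_powersetCard, Finset.card_univ,
            Fintype.card_fin]
  have hfinal : 3 * (n.choose 2 * (p - 1) ^ (n - 2)) ≤ (p - 1) ^ (n - 1) := by
    have : (p - 1) ^ (n - 1) = (p - 1) * (p - 1) ^ (n - 2) := by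
      conv_lhs => rw [show n - 1 = 1 + (n - 2) by omega]
      rw [pow_add, pow_one]
    rw [this, ← mul_assoc]
    exact Nat.mul_le_mul_right _ hq
  rw [card_Tor n p (by omega)]
  omega

theorem nonreg_card₂ {v : Tor 2 p} (hv : ¬ Function.Injective (fun i => v.1 i)) :
    v.1 0 = v.1 1 ∧ v.1 0 * v.1 1 = 1 := by
  obtain ⟨a, b, hab, hne⟩ := Function.not_injective_iff.mp hv
  constructor
  · fin_cases a <;> fin_cases b <;> simp_all <;> omega
  · have := (mem_Tor_iff _ _ _).mp v.2
    rwa [Fin.prod_univ_two] at this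

theorem nonreg_card_two :
    ((univ : Finset (Tor 2 p)).filter
      (fun v => ¬ Function.Injective (fun i => v.1 i))).card ≤ 2 := by
  classical
  have hone : ((1 : (ZMod p)ˣ) * (1 : (ZMod p)ˣ) = 1) := by simp
  set E1 : Tor 2 p := 1 with hE1
  have hmem2 : (fun _ : Fin 2 => (-1 : (ZMod p)ˣ)) ∈ Tor 2 p := by
    rw [mem_Tor_iff, Fin.prod_univ_two]
    simp
  set E2 : Tor 2 p := ⟨fun _ => -1, hmem2⟩ with hE2
  have hsub : ((univ : Finset (Tor 2 p)).filter
      (fun v => ¬ Function.Injective (fun i => v.1 i))) ⊆ {E1, E2} := by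
    intro v hv
    rw [Finset.mem_filter] at hv
    obtain ⟨heq, hprod⟩ := nonreg_card₂ hv.2
    have hsq : (v.1 0 : ZMod p) * (v.1 0 : ZMod p) = 1 := by
      have h := congrArg Units.val (show v.1 0 * v.1 0 = 1 by rw [← heq] at hprod; exact hprod)
      push_cast at h
      exact h
    have hconst : ∀ i : Fin 2, v.1 i = v.1 0 := by
      intro i
      fin_cases i
      · rfl
      · exact heq.symm
    rcases mul_self_eq_one_iff.mp hsq with h1 | h1
    · have : v = E1 := by
        apply Subtype.ext; funext i
        rw [hconst i, hE1]
        exact Units.ext h1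
      simp [this]
    · have : v = E2 := by
        apply Subtype.ext; funext i
        rw [hconst i, hE2]
        exact Units.ext (by rw [h1]; simp)
      simp [this]
  exact le_trans (Finset.card_le_card hsub)
    (le_trans (Finset.card_insert_le _ _) (by simp))

end Count2

section Count3

theorem sq_root_five : ∀ z : (ZMod 5)ˣ, z * z = 1 → ∃ y : (ZMod 5)ˣ, y ^ 2 = z := by decide

variable {n p m : ℕ} [Fact p.Prime]

theorem nonreg_sq_five (hp5 : p = 5) {v : Tor 2 p}
    (hv : ¬ Function.Injective (fun i => v.1 i)) :
    ∃ w : Tor 2 p, w ^ 2 = v := by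
  subst hp5
  obtain ⟨heq, hprod⟩ := nonreg_card₂ hv
  have hsq : v.1 0 * v.1 0 = 1 := by rw [← heq] at hprod; exact hprod
  obtain ⟨y, hy⟩ := sq_root_five _ hsq
  have hmem : (fun i : Fin 2 => if i = 0 then y else y⁻¹) ∈ Tor 2 5 := by
    rw [mem_Tor_iff, Fin.prod_univ_two]
    simp
  refine ⟨⟨_, hmem⟩, ?_⟩
  apply Subtype.ext
  have hcoe : ((⟨_, hmem⟩ : Tor 2 5) ^ 2).1 = (fun i : Fin 2 => if i = 0 then y else y⁻¹) ^ 2 :=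
    SubmonoidClass.coe_pow _ 2
  rw [hcoe]
  funext i
  have hv1 : v.1 1 = (v.1 0)⁻¹ := (inv_eq_of_mul_eq_one_right hprod).symm
  fin_cases i
  · show ((fun i : Fin 2 => if i = 0 then y else y⁻¹) ^ 2) 0 = v.1 0
    simpa using hy
  · show ((fun i : Fin 2 => if i = 0 then y else y⁻¹) ^ 2) 1 = v.1 1
    rw [Pi.pow_apply, if_neg (by decide), hv1, ← hy, inv_pow]

/-- The main torus estimate: at least one sixth of the torus consists of
regular elements that are not `m`-th powers in the torus. -/
theorem S_card (hp : p.Prime) (hn : 2 ≤ n) (hm : 2 ≤ m)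
    (hplarge : 3 * n.choose 2 + 1 ≤ p) (hpm : p % m = 1) :
    Fintype.card (Tor n p) ≤ 6 * ((univ : Finset (Tor n p)).filter
      (fun v => Function.Injective (fun i => v.1 i) ∧ ¬ ∃ w : Tor n p, w ^ m = v)).card := by
  classical
  have hdvd : m ∣ p - 1 := by
    refine ⟨p / m, ?_⟩
    have := Nat.div_add_mod p m
    omega
  set SF := (univ : Finset (Tor n p)).filter
    (fun v => Function.Injective (fun i => v.1 i) ∧ ¬ ∃ w : Tor n p, w ^ m = v) with hSF
  set NF := (univ : Finset (Tor n p)).filter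
    (fun v => ¬ Function.Injective (fun i => v.1 i)) with hNF
  set PF := (univ : Finset (Tor n p)).image (fun w => w ^ m) with hPF
  have hcover : (univ : Finset (Tor n p)) ⊆ SF ∪ NF ∪ PF := by
    intro v _
    by_cases hinj : Function.Injective (fun i => v.1 i)
    · by_cases hpow : ∃ w : Tor n p, w ^ m = v
      · obtain ⟨w, hw⟩ := hpow
        exact Finset.mem_union_right _ (Finset.mem_image.mpr ⟨w, Finset.mem_univ _, hw⟩)
      · exact Finset.mem_union_left _ (Finset.mem_union_left _
          (Finset.mem_filter.mpr ⟨Finset.mem_univ _, hinj, hpow⟩))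
    · exact Finset.mem_union_left _ (Finset.mem_union_right _
        (Finset.mem_filter.mpr ⟨Finset.mem_univ _, hinj⟩))
  have hT : Fintype.card (Tor n p) ≤ SF.card + NF.card + PF.card := by
    calc Fintype.card (Tor n p) = (univ : Finset (Tor n p)).card := (Finset.card_univ).symm
      _ ≤ (SF ∪ NF ∪ PF).card := Finset.card_le_card hcover
      _ ≤ (SF ∪ NF).card + PF.card := Finset.card_union_le _ _
      _ ≤ SF.card + NF.card + PF.card := by
          have := Finset.card_union_le SF NF
          omega
  have hP2 : 2 * PF.card ≤ Fintype.card (Tor n p) := pow_image_card hn hm hdvd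
  rcases Nat.lt_or_ge n 3 with hn2 | hn3
  · -- n = 2
    have hn2' : n = 2 := by omega
    subst hn2'
    have hNF2 : NF.card ≤ 2 := nonreg_card_two
    have hTcard : Fintype.card (Tor 2 p) = p - 1 := by
      rw [card_Tor 2 p (by omega)]; simp
    rcases Nat.lt_or_ge p 7 with hp7 | hp7
    · -- p = 5
      have hp5 : p = 5 := by
        have h2 : p ≠ 4 := fun h => by rw [h] at hp; norm_num at hp
        have h6 : p ≠ 6 := fun h => by rw [h] at hp; norm_num at hp
        simp only [Nat.choose_self] at hplarge
        omega
      rcases Nat.lt_or_ge m 3 with hm3 | hm3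
      · -- m = 2 : nonregular elements are squares
        have hm2 : m = 2 := by omega
        subst hm2
        have hcover2 : (univ : Finset (Tor 2 p)) ⊆ SF ∪ PF := by
          intro v _
          by_cases hpow : ∃ w : Tor 2 p, w ^ 2 = v
          · obtain ⟨w, hw⟩ := hpow
            exact Finset.mem_union_right _ (Finset.mem_image.mpr ⟨w, Finset.mem_univ _, hw⟩)
          · by_cases hinj : Function.Injective (fun i => v.1 i)
            · exact Finset.mem_union_left _
                (Finset.mem_filter.mpr ⟨Finset.mem_univ _, hinj, hpow⟩)
            · exact absurd (nonreg_sq_five hp5 hinj) hpow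
        have hT2 : Fintype.card (Tor 2 p) ≤ SF.card + PF.card :=
          le_trans (by rw [← Finset.card_univ]; exact Finset.card_le_card hcover2)
            (Finset.card_union_le _ _)
        rw [hTcard] at hT2 hP2 ⊢
        omega
      · have hP3 : 3 * PF.card ≤ Fintype.card (Tor 2 p) := pow_image_card₃ (by omega) hm3 hdvd
        rw [hTcard] at hT hP2 hP3 ⊢
        omega
    · rw [hTcard] at hT hP2 ⊢
      omega
  · have hNF3 : 3 * NF.card ≤ Fintype.card (Tor n p) := nonreg_card hn3 (by omega)
    omega

end Count3

section Group
variable {n p m : ℕ} [Fact p.Prime]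

/-- Permuted torus element. -/
def permTor (σ : Equiv.Perm (Fin n)) (v : Tor n p) : Tor n p :=
  ⟨fun j => v.1 (σ j), by
    rw [mem_Tor_iff]
    rw [Equiv.prod_comp σ (fun i => v.1 i)]
    exact (mem_Tor_iff _ _ _).mp v.2⟩

theorem Msig_card (v0 : Tor n p) (hv0 : Function.Injective (fun i => v0.1 i))
    (σ : Equiv.Perm (Fin n)) :
    ((univ : Finset (Matrix.SpecialLinearGroup (Fin n) (ZMod p))).filter
      (fun h => dIag n p v0 * h = h * dIag n p (permTor σ v0))).card
      ≤ Fintype.card (Tor n p) := by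
  classical
  set vσ := permTor σ v0 with hvσ
  have hvσinj : Function.Injective (fun i => vσ.1 i) := by
    intro i j hij
    exact σ.injective (hv0 hij)
  set MS := (univ : Finset (Matrix.SpecialLinearGroup (Fin n) (ZMod p))).filter
    (fun h => dIag n p v0 * h = h * dIag n p vσ) with hMS
  rcases Finset.eq_empty_or_nonempty MS with he | ⟨h0, hh0⟩
  · rw [he]; simp
  · have hh0' : dIag n p v0 * h0 = h0 * dIag n p vσ := (Finset.mem_filter.mp hh0).2
    have hkey : ∀ h ∈ MS, (h0⁻¹ * h) * dIag n p vσ = dIag n p vσ * (h0⁻¹ * h) := by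
      intro h hh
      have hh' : dIag n p v0 * h = h * dIag n p vσ := (Finset.mem_filter.mp hh).2
      have e1 : h0⁻¹ * dIag n p v0 = dIag n p vσ * h0⁻¹ := by
        have := congrArg (fun y => h0⁻¹ * y * h0⁻¹) hh0'
        simpa [mul_assoc] using this
      calc (h0⁻¹ * h) * dIag n p vσ = h0⁻¹ * (h * dIag n p vσ) := by rw [mul_assoc]
        _ = h0⁻¹ * (dIag n p v0 * h) := by rw [hh']
        _ = (h0⁻¹ * dIag n p v0) * h := by rw [mul_assoc]
        _ = dIag n p vσ * (h0⁻¹ * h) := by rw [e1, mul_assoc]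
    set f : Matrix.SpecialLinearGroup (Fin n) (ZMod p) → Tor n p := fun h =>
      if hc : (h0⁻¹ * h) * dIag n p vσ = dIag n p vσ * (h0⁻¹ * h) then
        Classical.choose (comm_dIag_eq hvσinj hc) else 1 with hfdef
    have hspec : ∀ h ∈ MS, dIag n p (f h) = h0⁻¹ * h := by
      intro h hh
      rw [hfdef]
      dsimp only
      rw [dif_pos (hkey h hh)]
      exact Classical.choose_spec (comm_dIag_eq hvσinj (hkey h hh))
    have hinj : Set.InjOn f MS := by
      intro h1 hh1 h2 hh2 heq
      have e1 := hspec h1 hh1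
      have e2 := hspec h2 hh2
      rw [heq, e2] at e1
      exact (mul_left_cancel e1).symm
    calc MS.card ≤ (univ : Finset (Tor n p)).card :=
          Finset.card_le_card_of_injOn f (fun _ _ => Finset.mem_univ _) hinj
      _ = Fintype.card (Tor n p) := Finset.card_univ

theorem entry_rel {v0 v : Tor n p} {h : Matrix.SpecialLinearGroup (Fin n) (ZMod p)}
    (hcomm : dIag n p v0 * h = h * dIag n p v) (i j : Fin n)
    (hne : (h : Matrix (Fin n) (Fin n) (ZMod p)) i j ≠ 0) : v0.1 i = v.1 j := by
  have hmat : Matrix.diagonal (fun i => (v0.1 i : ZMod p)) * (h : Matrix (Fin n) (Fin n) (ZMod p))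
      = (h : Matrix (Fin n) (Fin n) (ZMod p)) * Matrix.diagonal (fun i => (v.1 i : ZMod p)) := by
    have := Subtype.ext_iff.mp hcomm
    simpa [coe_dIag] using this
  have he := congrFun (congrFun hmat i) j
  rw [Matrix.diagonal_mul, Matrix.mul_diagonal] at he
  apply Units.ext
  have : ((v0.1 i : ZMod p) - (v.1 j : ZMod p)) * (h : Matrix (Fin n) (Fin n) (ZMod p)) i j = 0 := by
    ring_nf
    linear_combination he
  rcases mul_eq_zero.mp this with h0 | h0
  · linear_combination h0
  · exact absurd h0 hne

theorem exists_perm {v0 v : Tor n p} {h : Matrix.SpecialLinearGroup (Fin n) (ZMod p)}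
    (hv0 : Function.Injective (fun i => v0.1 i)) (hv : Function.Injective (fun i => v.1 i))
    (hcomm : dIag n p v0 * h = h * dIag n p v) :
    ∃ σ : Equiv.Perm (Fin n), v = permTor σ v0 := by
  have hcol : ∀ j, ∃ i, (h : Matrix (Fin n) (Fin n) (ZMod p)) i j ≠ 0 := by
    intro j
    by_contra hcon
    push_neg at hcon
    have hdet : (h : Matrix (Fin n) (Fin n) (ZMod p)).det = 0 :=
      Matrix.det_eq_zero_of_column_eq_zero j hcon
    rw [h.2] at hdet
    exact one_ne_zero hdet
  set g : Fin n → Fin n := fun j => (hcol j).choose with hg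
  have hgspec : ∀ j, (h : Matrix (Fin n) (Fin n) (ZMod p)) (g j) j ≠ 0 :=
    fun j => (hcol j).choose_spec
  have hvj : ∀ j, v.1 j = v0.1 (g j) := fun j => (entry_rel hcomm (g j) j (hgspec j)).symm
  have hginj : Function.Injective g := by
    intro j1 j2 hj
    apply hv
    show v.1 j1 = v.1 j2
    rw [hvj j1, hvj j2, hj]
  have hgbij : Function.Bijective g := (Finite.injective_iff_bijective).mp hginj
  refine ⟨Equiv.ofBijective g hgbij, ?_⟩
  apply Subtype.ext
  funext j
  show v.1 j = v0.1 (Equiv.ofBijective g hgbij j)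
  rw [hvj j]
  rfl

theorem MF_card (v0 : Tor n p) (hv0 : Function.Injective (fun i => v0.1 i)) :
    ((univ : Finset (Matrix.SpecialLinearGroup (Fin n) (ZMod p))).filter
      (fun h => ∃ v : Tor n p, Function.Injective (fun i => v.1 i) ∧
        dIag n p v0 * h = h * dIag n p v)).card
      ≤ n.factorial * Fintype.card (Tor n p) := by
  classical
  have hsub : ((univ : Finset (Matrix.SpecialLinearGroup (Fin n) (ZMod p))).filter
      (fun h => ∃ v : Tor n p, Function.Injective (fun i => v.1 i) ∧
        dIag n p v0 * h = h * dIag n p v)) ⊆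
      (univ : Finset (Equiv.Perm (Fin n))).biUnion (fun σ =>
        (univ : Finset (Matrix.SpecialLinearGroup (Fin n) (ZMod p))).filter
          (fun h => dIag n p v0 * h = h * dIag n p (permTor σ v0))) := by
    intro h hh
    obtain ⟨_, v, hvinj, hcomm⟩ := Finset.mem_filter.mp hh
    obtain ⟨σ, rfl⟩ := exists_perm hv0 hvinj hcomm
    exact Finset.mem_biUnion.mpr ⟨σ, Finset.mem_univ _,
      Finset.mem_filter.mpr ⟨Finset.mem_univ _, hcomm⟩⟩
  calc _ ≤ ((univ : Finset (Equiv.Perm (Fin n))).biUnion (fun σ =>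
        (univ : Finset (Matrix.SpecialLinearGroup (Fin n) (ZMod p))).filter
          (fun h => dIag n p v0 * h = h * dIag n p (permTor σ v0)))).card :=
        Finset.card_le_card hsub
    _ ≤ ∑ σ : Equiv.Perm (Fin n), ((univ : Finset (Matrix.SpecialLinearGroup (Fin n) (ZMod p))).filter
          (fun h => dIag n p v0 * h = h * dIag n p (permTor σ v0))).card :=
        Finset.card_biUnion_le
    _ ≤ ∑ _σ : Equiv.Perm (Fin n), Fintype.card (Tor n p) :=
        Finset.sum_le_sum (fun σ _ => Msig_card v0 hv0 σ)
    _ = n.factorial * Fintype.card (Tor n p) := by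
        rw [Finset.sum_const, smul_eq_mul, Finset.card_univ, Fintype.card_perm, Fintype.card_fin]

end Group

/-- **Powers in `SL_n(ℤ/pℤ)`.** If `p ≥ 3·C(n,2) + 1` is prime and `p ≡ 1 (mod m)`,
then the set of `m`-th powers in `SL_n(ℤ/pℤ)` has size at most
`(1 − 1/(6·n!))·|SL_n(ℤ/pℤ)|`. -/
theorem powers_in_SL_mod_p (n m p : ℕ) (hn : 2 ≤ n) (hm : 2 ≤ m) (hp : p.Prime)
    (hplarge : 3 * n.choose 2 + 1 ≤ p) (hpm : p % m = 1) :
    (Nat.card {x : Matrix.SpecialLinearGroup (Fin n) (ZMod p) |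
        ∃ g : Matrix.SpecialLinearGroup (Fin n) (ZMod p), g ^ m = x} : ℝ) ≤
      (1 - 1 / (6 * (n.factorial : ℝ))) *
        (Nat.card (Matrix.SpecialLinearGroup (Fin n) (ZMod p)) : ℝ) := by
  haveI : Fact p.Prime := ⟨hp⟩
  classical
  set SF := (univ : Finset (Tor n p)).filter
    (fun v => Function.Injective (fun i => v.1 i) ∧ ¬ ∃ w : Tor n p, w ^ m = v) with hSFdef
  have hS : Fintype.card (Tor n p) ≤ 6 * SF.card := S_card hp hn hm hplarge hpm
  set Φ : Matrix.SpecialLinearGroup (Fin n) (ZMod p) × Tor n p →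
      Matrix.SpecialLinearGroup (Fin n) (ZMod p) :=
    fun gv => gv.1 * dIag n p gv.2 * gv.1⁻¹ with hΦdef
  set dom := (univ : Finset (Matrix.SpecialLinearGroup (Fin n) (ZMod p))) ×ˢ SF with hdomdef
  set XF := dom.image Φ with hXFdef
  have hfib : ∀ x ∈ XF, (dom.filter (fun gv => Φ gv = x)).card
      ≤ n.factorial * Fintype.card (Tor n p) := by
    intro x hx
    obtain ⟨gv0, hgv0, hgv0x⟩ := Finset.mem_image.mp hx
    obtain ⟨g0, v0⟩ := gv0
    have hv0S := Finset.mem_filter.mp (Finset.mem_product.mp hgv0).2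
    have hv0inj := hv0S.2.1
    refine le_trans ?_ (MF_card v0 hv0inj)
    apply Finset.card_le_card_of_injOn (fun gv => g0⁻¹ * gv.1)
    · intro gv hgv
      rw [Finset.mem_coe, Finset.mem_filter] at hgv
      obtain ⟨hgvdom, hgvx⟩ := hgv
      have hvinj := (Finset.mem_filter.mp (Finset.mem_product.mp hgvdom).2).2.1
      refine Finset.mem_filter.mpr ⟨Finset.mem_univ _, gv.2, hvinj, ?_⟩
      have hx2 : gv.1 * dIag n p gv.2 * gv.1⁻¹ = g0 * dIag n p v0 * g0⁻¹ := by
        rw [show gv.1 * dIag n p gv.2 * gv.1⁻¹ = Φ gv from rfl, hgvx, ← hgv0x]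
      have h3 := congrArg (fun y => g0⁻¹ * y * gv.1) hx2
      simpa [mul_assoc] using h3.symm
    · intro a ha b hb hab
      have h1 : a.1 = b.1 := mul_left_cancel hab
      have ha' : a.1 * dIag n p a.2 * a.1⁻¹ = x := (Finset.mem_filter.mp ha).2
      have hb' : b.1 * dIag n p b.2 * b.1⁻¹ = x := (Finset.mem_filter.mp hb).2
      rw [← h1] at hb'
      have h2 : dIag n p a.2 = dIag n p b.2 := by
        have := ha'.trans hb'.symm
        have := mul_right_cancel this
        exact mul_left_cancel this
      exact Prod.ext h1 (dIag_injective n p h2)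
  have hcount : Fintype.card (Matrix.SpecialLinearGroup (Fin n) (ZMod p)) * SF.card
      ≤ n.factorial * Fintype.card (Tor n p) * XF.card := by
    have h := Finset.card_le_mul_card_image (f := Φ) dom
      (n.factorial * Fintype.card (Tor n p)) hfib
    rw [hdomdef, Finset.card_product, Finset.card_univ] at h
    exact h
  have hXpow : ∀ x ∈ XF, ¬ ∃ g : Matrix.SpecialLinearGroup (Fin n) (ZMod p), g ^ m = x := by
    rintro x hx ⟨g, hg⟩
    obtain ⟨⟨g0, v0⟩, hdom0, hphi⟩ := Finset.mem_image.mp hx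
    have hv0S := Finset.mem_filter.mp (Finset.mem_product.mp hdom0).2
    have hv0inj := hv0S.2.1
    apply hv0S.2.2
    have hconj : (g0⁻¹ * g * g0) ^ m = dIag n p v0 := by
      have hc : (g0⁻¹ * g * g0⁻¹⁻¹) ^ m = g0⁻¹ * g ^ m * g0⁻¹⁻¹ := conj_pow ..
      rw [inv_inv] at hc
      rw [hc, hg, ← hphi]
      show g0⁻¹ * (g0 * dIag n p v0 * g0⁻¹) * g0 = dIag n p v0
      simp [mul_assoc]
    exact root_in_torus hv0inj hconj
  set ImF := (univ : Finset (Matrix.SpecialLinearGroup (Fin n) (ZMod p))).filter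
    (fun x => ∃ g : Matrix.SpecialLinearGroup (Fin n) (ZMod p), g ^ m = x) with hImFdef
  have hdisj : ImF ⊆ univ \ XF := by
    intro x hx
    exact Finset.mem_sdiff.mpr ⟨Finset.mem_univ _,
      fun hX => hXpow x hX (Finset.mem_filter.mp hx).2⟩
  have hIm : ImF.card ≤ Fintype.card (Matrix.SpecialLinearGroup (Fin n) (ZMod p)) - XF.card := by
    have := Finset.card_le_card hdisj
    rwa [Finset.card_sdiff_of_subset (Finset.subset_univ _), Finset.card_univ] at this
  have hXle : XF.card ≤ Fintype.card (Matrix.SpecialLinearGroup (Fin n) (ZMod p)) :=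
    Finset.card_le_univ _
  have hTpos : 0 < Fintype.card (Tor n p) := Fintype.card_pos
  have hmain : Fintype.card (Matrix.SpecialLinearGroup (Fin n) (ZMod p))
      ≤ 6 * n.factorial * XF.card := by
    have h1 : Fintype.card (Matrix.SpecialLinearGroup (Fin n) (ZMod p)) *
        Fintype.card (Tor n p) ≤
        (6 * n.factorial * XF.card) * Fintype.card (Tor n p) := by
      calc Fintype.card (Matrix.SpecialLinearGroup (Fin n) (ZMod p)) * Fintype.card (Tor n p)
          ≤ Fintype.card (Matrix.SpecialLinearGroup (Fin n) (ZMod p)) * (6 * SF.card) :=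
            Nat.mul_le_mul_left _ hS
        _ = 6 * (Fintype.card (Matrix.SpecialLinearGroup (Fin n) (ZMod p)) * SF.card) := by ring
        _ ≤ 6 * (n.factorial * Fintype.card (Tor n p) * XF.card) :=
            Nat.mul_le_mul_left _ hcount
        _ = (6 * n.factorial * XF.card) * Fintype.card (Tor n p) := by ring
    exact Nat.le_of_mul_le_mul_right h1 hTpos
  have hcard1 : Nat.card {x : Matrix.SpecialLinearGroup (Fin n) (ZMod p) |
      ∃ g : Matrix.SpecialLinearGroup (Fin n) (ZMod p), g ^ m = x} = ImF.card := by
    rw [Nat.card_coe_set_eq, Set.ncard_eq_toFinset_card']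
    congr 1
    ext x
    simp [hImFdef]
  have hcardG : Nat.card (Matrix.SpecialLinearGroup (Fin n) (ZMod p))
      = Fintype.card (Matrix.SpecialLinearGroup (Fin n) (ZMod p)) := Nat.card_eq_fintype_card
  rw [hcard1, hcardG]
  have hfpos : (0 : ℝ) < (n.factorial : ℝ) := by
    exact_mod_cast n.factorial_pos
  have hXr : (Fintype.card (Matrix.SpecialLinearGroup (Fin n) (ZMod p)) : ℝ)
      ≤ 6 * (n.factorial : ℝ) * (XF.card : ℝ) := by
    exact_mod_cast hmain
  have hImr : (ImF.card : ℝ) + (XF.card : ℝ)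
      ≤ (Fintype.card (Matrix.SpecialLinearGroup (Fin n) (ZMod p)) : ℝ) := by
    have h2 : ImF.card + XF.card
        ≤ Fintype.card (Matrix.SpecialLinearGroup (Fin n) (ZMod p)) := by omega
    exact_mod_cast h2
  have hdiv : (Fintype.card (Matrix.SpecialLinearGroup (Fin n) (ZMod p)) : ℝ) /
      (6 * (n.factorial : ℝ)) ≤ (XF.card : ℝ) := by
    rw [div_le_iff₀ (by positivity)]
    linarith
  have hkey : (1 - 1 / (6 * (n.factorial : ℝ))) *
      (Fintype.card (Matrix.SpecialLinearGroup (Fin n) (ZMod p)) : ℝ)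
      = (Fintype.card (Matrix.SpecialLinearGroup (Fin n) (ZMod p)) : ℝ)
        - (Fintype.card (Matrix.SpecialLinearGroup (Fin n) (ZMod p)) : ℝ)
          / (6 * (n.factorial : ℝ)) := by
    field_simp
  linarith
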